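/- Under the hypotheses 1+α₁β < 0, 1+α₂β > 0, μ − k₁² − k₂² > 0, and F(k) > μ (with F(k) = (1 + 2(1+β²)/(1+α₁β))k₁² + (1 + 2(1+β²)/(1+α₂β))k₂²), the matrix 𝒟(k) defined by D_xx = 2k₁²(1+β²)/R₀² − (α₁β+1), D_yy = 2k₂²(1+β²)/R₀² − (α₂β+1), D_xy = 2k₁k₂(1+β²)/R₀² with R₀² = μ − k₁² − k₂² is positive definite. -/

import Mathlib

/-- In the fully unstable region of case (b): `1+α₁β < 0`, `1+α₂β > 0`, and `F(k) > μ` imply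
that 𝒟(k) is positive definite. -/
theorem D_posdef_case_b_fully_unstable (α₁ α₂ β μ k₁ k₂ : ℝ)
    (h1 : 1 + α₁ * β < 0) (h2 : 1 + α₂ * β > 0)
    (hR : μ - k₁ ^ 2 - k₂ ^ 2 > 0)
    (hF : (1 + 2 * (1 + β ^ 2) / (1 + α₁ * β)) * k₁ ^ 2
        + (1 + 2 * (1 + β ^ 2) / (1 + α₂ * β)) * k₂ ^ 2 > μ) :
    let R0sq := μ - k₁ ^ 2 - k₂ ^ 2
    let Dxx := 2 * k₁ ^ 2 * (1 + β ^ 2) / R0sq - (α₁ * β + 1)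
    let Dyy := 2 * k₂ ^ 2 * (1 + β ^ 2) / R0sq - (α₂ * β + 1)
    let Dxy := 2 * k₁ * k₂ * (1 + β ^ 2) / R0sq
    ∀ q₁ q₂ : ℝ, (q₁, q₂) ≠ (0, 0) →
      0 < Dxx * q₁ ^ 2 + 2 * Dxy * q₁ * q₂ + Dyy * q₂ ^ 2 := by
  intro R0sq Dxx Dyy Dxy q₁ q₂ hq
  have hR0 : (0:ℝ) < R0sq := hR
  have hRne : R0sq ≠ 0 := ne_of_gt hR0
  have hc : (0:ℝ) < 1 + β ^ 2 := by positivity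
  have hane : 1 + α₁ * β ≠ 0 := ne_of_lt h1
  have hbne : 1 + α₂ * β ≠ 0 := ne_of_gt h2
  have hprod : (1 + α₁ * β) * (1 + α₂ * β) < 0 := mul_neg_of_neg_of_pos h1 h2
  -- determinant numerator inequality
  have hkey : 0 < (α₁ * β + 1) * (α₂ * β + 1) * R0sq
      - 2 * (1 + β ^ 2) * (k₁ ^ 2 * (α₂ * β + 1) + k₂ ^ 2 * (α₁ * β + 1)) := by
    have hF' := mul_lt_mul_of_neg_right hF hprod
    field_simp at hF'
    show 0 < (α₁ * β + 1) * (α₂ * β + 1) * (μ - k₁ ^ 2 - k₂ ^ 2)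
      - 2 * (1 + β ^ 2) * (k₁ ^ 2 * (α₂ * β + 1) + k₂ ^ 2 * (α₁ * β + 1))
    have e1 : (1 + β * α₁) * (2 * (1 + β ^ 2) / (1 + β * α₁)) = 2 * (1 + β ^ 2) :=
      mul_div_cancel₀ _ (by rw [mul_comm β]; exact hane)
    have e2 : (1 + β * α₂) * (2 * (1 + β ^ 2) / (1 + β * α₂)) = 2 * (1 + β ^ 2) :=
      mul_div_cancel₀ _ (by rw [mul_comm β]; exact hbne)
    have e : (1 + β * α₁) * (1 + β * α₂) *
        ((1 + 2 * (1 + β ^ 2) / (1 + β * α₁)) * k₁ ^ 2 + (1 + 2 * (1 + β ^ 2) / (1 + β * α₂)) * k₂ ^ 2)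
        = (1 + β * α₁) * (1 + β * α₂) * (k₁ ^ 2 + k₂ ^ 2) + (1 + β * α₂) * k₁ ^ 2 * (2 * (1 + β ^ 2))
          + (1 + β * α₁) * k₂ ^ 2 * (2 * (1 + β ^ 2)) := by
      linear_combination ((1 + β * α₂) * k₁ ^ 2) * e1 + ((1 + β * α₁) * k₂ ^ 2) * e2
    rw [e] at hF'
    nlinarith [hF']
  have hDxx' : 0 < 2 * k₁ ^ 2 * (1 + β ^ 2) - (α₁ * β + 1) * R0sq := by
    nlinarith [sq_nonneg k₁, mul_pos (neg_pos.mpr h1) hR0]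
  have hgoal : Dxx * q₁ ^ 2 + 2 * Dxy * q₁ * q₂ + Dyy * q₂ ^ 2 =
      ((2 * k₁ ^ 2 * (1 + β ^ 2) - (α₁ * β + 1) * R0sq) * q₁ ^ 2
        + 2 * (2 * k₁ * k₂ * (1 + β ^ 2)) * q₁ * q₂
        + (2 * k₂ ^ 2 * (1 + β ^ 2) - (α₂ * β + 1) * R0sq) * q₂ ^ 2) / R0sq := by
    show (2 * k₁ ^ 2 * (1 + β ^ 2) / R0sq - (α₁ * β + 1)) * q₁ ^ 2
        + 2 * (2 * k₁ * k₂ * (1 + β ^ 2) / R0sq) * q₁ * q₂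
        + (2 * k₂ ^ 2 * (1 + β ^ 2) / R0sq - (α₂ * β + 1)) * q₂ ^ 2 = _
    field_simp
  rw [hgoal]
  apply div_pos _ hR0
  rcases eq_or_ne q₂ 0 with hq₂ | hq₂
  · subst hq₂
    have hq₁ : q₁ ≠ 0 := by
      intro h; exact hq (by simp [h])
    have : 0 < q₁ ^ 2 := by positivity
    nlinarith [mul_pos hDxx' this]
  · have hq₂2 : 0 < q₂ ^ 2 := by positivity
    nlinarith [sq_nonneg ((2 * k₁ ^ 2 * (1 + β ^ 2) - (α₁ * β + 1) * R0sq) * q₁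
        + 2 * k₁ * k₂ * (1 + β ^ 2) * q₂),
      mul_pos (mul_pos hR0 hkey) hq₂2, hDxx']
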